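/- arXiv:2505.05734 — 11 statements merged into one kernel-verified Lean document; each statement's English description precedes it below -/
import Mathlib

section
/- For the Pell sequence (P_0 = 0, P_1 = 1, P_{n+1} = 2P_n + P_{n-1}), for all positive integers n: 2·∑_{k=1}^{n} k·P_{k-1} = n·P_{n+1} − (n+1)·P_n. -/
theorem stmt_0 (P : ℕ → ℤ) (h0 : P 0 = 0) (h1 : P 1 = 1)
    (hrec : ∀ n : ℕ, P (n + 2) = 2 * P (n + 1) + P n) :
    ∀ n : ℕ, 1 ≤ n →
      2 * ∑ k ∈ Finset.Icc 1 n, (k : ℤ) * P (k - 1) =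
        (n : ℤ) * P (n + 1) - ((n : ℤ) + 1) * P n := by
  intro n hn
  induction n with
  | zero => omega
  | succ m ih =>
    rcases Nat.eq_zero_or_pos m with hm | hm
    · subst hm
      simp [h0, h1, hrec 0]
    · rw [Finset.sum_Icc_succ_top (by omega : 1 ≤ m + 1), mul_add, ih hm]
      have hr := hrec m
      show _ = _ - _ * P (m + 1)
      push_cast
      simp only [Nat.add_sub_cancel, show m + 1 + 1 = m + 2 from rfl]
      linear_combination (-((m:ℤ)+1)) * hr
end

section
/- For the Pell sequence, for all positive integers n: 2·∑_{k=1}^{n} k³·P_{k-1} = (n³ + 3n − 3)·P_{n+1} − (n³ + 3n² + 1)·P_n + 3. -/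
theorem stmt_3 (P : ℕ → ℤ) (h0 : P 0 = 0) (h1 : P 1 = 1)
    (hrec : ∀ n : ℕ, P (n + 2) = 2 * P (n + 1) + P n) :
    ∀ n : ℕ, 1 ≤ n →
      2 * ∑ k ∈ Finset.Icc 1 n, (k : ℤ) ^ 3 * P (k - 1) =
        ((n : ℤ) ^ 3 + 3 * n - 3) * P (n + 1)
          - ((n : ℤ) ^ 3 + 3 * (n : ℤ) ^ 2 + 1) * P n + 3 := by
  intro n hn
  induction n with
  | zero => omega
  | succ m ih =>
    rcases Nat.eq_or_lt_of_le hn with h | h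
    · obtain rfl : m = 0 := by omega
      simp [h0, h1, hrec 0]
    · have hm : 1 ≤ m := by omega
      have hih := ih hm
      rw [Finset.sum_Icc_succ_top (by omega), mul_add, hih]
      have hs : (m + 1 : ℕ) - 1 = m := rfl
      rw [hs, hrec m]
      push_cast
      ring
end

section
/- For the Pell sequence, for all positive integers n: 2·∑_{k=1}^{n} k⁴·P_{k-1} = (n⁴ + 6n² − 12n + 13)·P_{n+1} − (n⁴ + 4n³ + 4n − 6)·P_n − 13. -/
theorem stmt_4 (P : ℕ → ℤ) (h0 : P 0 = 0) (h1 : P 1 = 1)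
    (hrec : ∀ n : ℕ, P (n + 2) = 2 * P (n + 1) + P n) :
    ∀ n : ℕ, 1 ≤ n →
      2 * ∑ k ∈ Finset.Icc 1 n, (k : ℤ) ^ 4 * P (k - 1) =
        ((n : ℤ) ^ 4 + 6 * (n : ℤ) ^ 2 - 12 * n + 13) * P (n + 1)
          - ((n : ℤ) ^ 4 + 4 * (n : ℤ) ^ 3 + 4 * n - 6) * P n - 13 := by
  intro n hn
  induction n with
  | zero => omega
  | succ m ih =>
    rcases Nat.eq_zero_or_pos m with hm | hm
    · subst hm
      simp [Finset.Icc_self, h0, h1, hrec 0]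
    · rw [Finset.sum_Icc_succ_top (by omega)]
      have := ih hm
      have hr := hrec m
      have : (m + 1 : ℕ) + 1 = m + 2 := rfl
      simp only [this, hr]
      rw [mul_add, ih hm]
      have hsub : (m + 1 : ℕ) - 1 = m := by omega
      rw [hsub]
      push_cast
      ring
end

section
/- Let (s_n) be the generalized Fibonacci sequence with parameters a, b ∈ ℕ⁺, c_0, c_1 ∈ ℤ, (c_0,c_1) ≠ (0,0), and assume both 2c_1 − j_1·c_0 and 2c_1 − j_2·c_0 are nonzero, where j_{1,2} = a ± √(a²+4b). Then the sequence of ratios s_{n+1}/s_n (defined for n large enough so that s_n ≠ 0) converges to j_1/2 = (a + √(a²+4b))/2 as n → ∞. -/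
theorem stmt_8 (a b : ℕ) (ha : 0 < a) (hb : 0 < b) (c0 c1 : ℤ)
    (hc : (c0, c1) ≠ (0, 0)) (s : ℕ → ℝ)
    (hs0 : s 0 = c0) (hs1 : s 1 = c1)
    (hrec : ∀ n : ℕ, s (n + 2) = a * s (n + 1) + b * s n)
    (h1 : 2 * (c1 : ℝ) - ((a : ℝ) + Real.sqrt ((a : ℝ) ^ 2 + 4 * b)) * c0 ≠ 0)
    (h2 : 2 * (c1 : ℝ) - ((a : ℝ) - Real.sqrt ((a : ℝ) ^ 2 + 4 * b)) * c0 ≠ 0) :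
    Filter.Tendsto (fun n : ℕ => s (n + 1) / s n) Filter.atTop
      (nhds (((a : ℝ) + Real.sqrt ((a : ℝ) ^ 2 + 4 * b)) / 2)) := by
  have hapos : (0:ℝ) < a := by exact_mod_cast ha
  have hbpos : (0:ℝ) < b := by exact_mod_cast hb
  set D : ℝ := (a:ℝ)^2 + 4*b with hD
  have hDpos : 0 < D := by nlinarith
  set q : ℝ := Real.sqrt D with hqdef
  have hq2 : q^2 = D := Real.sq_sqrt hDpos.le
  have hqpos : 0 < q := Real.sqrt_pos.mpr hDpos
  have hqa : (a:ℝ) < q := by nlinarith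
  set r1 : ℝ := ((a:ℝ) + q)/2 with hr1def
  set r2 : ℝ := ((a:ℝ) - q)/2 with hr2def
  have hr1pos : 0 < r1 := by rw [hr1def]; positivity
  have hr1ne : r1 ≠ 0 := hr1pos.ne'
  set A : ℝ := (2*c1 - ((a:ℝ) - q)*c0)/(2*q) with hAdef
  set B : ℝ := (((a:ℝ) + q)*c0 - 2*c1)/(2*q) with hBdef
  have hAne : A ≠ 0 := div_ne_zero h2 (by positivity)
  have hBne : B ≠ 0 := by
    rw [hBdef]
    apply div_ne_zero _ (by positivity)
    intro h
    apply h1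
    linarith [h]
  have hr1sq : r1^2 = a*r1 + b := by
    rw [hr1def]; field_simp; nlinarith [hq2]
  have hr2sq : r2^2 = a*r2 + b := by
    rw [hr2def]; field_simp; nlinarith [hq2]
  have key : ∀ n, s n = A * r1^n + B * r2^n ∧ s (n+1) = A * r1^(n+1) + B * r2^(n+1) := by
    intro n
    induction n with
    | zero =>
      constructor
      · rw [hs0, hAdef, hBdef]; field_simp; ring
      · rw [hs1, hAdef, hBdef, hr1def, hr2def]; field_simp; ring
    | succ n ih =>
      refine ⟨ih.2, ?_⟩
      rw [hrec n, ih.1, ih.2]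
      linear_combination (-(A * r1^n)) * hr1sq + (-(B * r2^n)) * hr2sq
  set t : ℝ := r2 / r1 with htdef
  have habs : |t| < 1 := by
    rw [abs_lt]
    constructor
    · rw [htdef, lt_div_iff₀ hr1pos, hr1def, hr2def]; linarith
    · rw [htdef, div_lt_one hr1pos, hr1def, hr2def]; linarith
  have ht : Filter.Tendsto (fun n : ℕ => t^n) Filter.atTop (nhds 0) :=
    tendsto_pow_atTop_nhds_zero_of_abs_lt_one habs
  have hmain : Filter.Tendsto (fun n : ℕ => (A*r1 + B*r2*t^n)/(A + B*t^n))
      Filter.atTop (nhds ((A*r1 + B*r2*0)/(A + B*0))) := by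
    apply Filter.Tendsto.div
    · exact Filter.Tendsto.add tendsto_const_nhds (ht.const_mul _)
    · exact Filter.Tendsto.add tendsto_const_nhds (ht.const_mul _)
    · simpa using hAne
  have hval : (A*r1 + B*r2*0)/(A + B*0) = r1 := by
    rw [mul_zero, mul_zero, add_zero, add_zero, mul_comm, mul_div_assoc,
      div_self hAne, mul_one]
  rw [hval] at hmain
  have heq : ∀ n : ℕ, s (n+1) / s n = (A*r1 + B*r2*t^n)/(A + B*t^n) := by
    intro n
    have hpow : t^n = r2^n / r1^n := div_pow r2 r1 n
    have hn1 : s (n+1) = (A*r1 + B*r2*t^n) * r1^n := by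
      rw [(key n).2, hpow]; field_simp; ring
    have hn0 : s n = (A + B*t^n) * r1^n := by
      rw [(key n).1, hpow]; field_simp
    rw [hn1, hn0, mul_div_mul_right _ _ (pow_ne_zero n hr1ne)]
  exact hmain.congr fun n => (heq n).symm
end

section
/- Let (s_n) be the generalized Fibonacci sequence with parameters a, b ∈ ℕ⁺ (a + b > 1), c_0, c_1 ∈ ℤ, (c_0,c_1) ≠ (0,0), and let (b_0(d),…,b_d(d)) be the unique solution of B_d·(b_0,…,b_d)^T = 2·(C(d,0)2^d, …, C(d,d)2^0)^T. Define F(x) = ∑_{i=0}^d b_i(d)·x^i, G(x) = −2(x+1)^d + b·∑_{i=0}^d b_i(d)·(x+1)^i, and H = 2c_0 + 2^{d+1}c_1 − (a·c_1 + b·c_0)·∑_{i=0}^d b_i(d) − b·c_1·∑_{i=0}^d 2^i·b_i(d). Then for all positive integers n: 2·∑_{k=1}^n k^d·s_{k−1} = F(n)·s_{n+1} + G(n)·s_n + H. -/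
theorem stmt_11 (a b : ℕ) (ha : 0 < a) (hb : 0 < b) (hab : 1 < a + b)
    (c0 c1 : ℤ) (hc : (c0, c1) ≠ (0, 0)) (s : ℕ → ℝ)
    (hs0 : s 0 = c0) (hs1 : s 1 = c1)
    (hrec : ∀ n : ℕ, s (n + 2) = a * s (n + 1) + b * s n)
    (d : ℕ) (v : Fin (d + 1) → ℝ)
    (hv : (Matrix.of fun i j : Fin (d + 1) =>
        if (j : ℕ) < (i : ℕ) then (0 : ℝ)
        else if (i : ℕ) = (j : ℕ) then (a : ℝ) + b - 1
        else (2 ^ ((j : ℕ) - (i : ℕ)) * (b : ℝ) + a) *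
          (Nat.choose (j : ℕ) (i : ℕ) : ℝ)).mulVec v =
      fun k : Fin (d + 1) => 2 * ((Nat.choose d (k : ℕ) : ℝ) * 2 ^ (d - (k : ℕ))))
    (F G : ℝ → ℝ) (H : ℝ)
    (hF : ∀ x : ℝ, F x = ∑ i : Fin (d + 1), v i * x ^ (i : ℕ))
    (hG : ∀ x : ℝ, G x = -2 * (x + 1) ^ d + (∑ i : Fin (d + 1), v i * (x + 1) ^ (i : ℕ)) * b)
    (hH : H = 2 * c0 + 2 ^ (d + 1) * c1
      - ((a : ℝ) * c1 + (b : ℝ) * c0) * ∑ i : Fin (d + 1), v i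
      - (b : ℝ) * c1 * ∑ i : Fin (d + 1), 2 ^ (i : ℕ) * v i) :
    ∀ n : ℕ, 1 ≤ n →
      2 * ∑ k ∈ Finset.Icc 1 n, (k : ℝ) ^ d * s (k - 1) =
        F n * s (n + 1) + G n * s n + H := by
  have hM : ∀ k : Fin (d + 1),
      (∑ j : Fin (d + 1),
        (if (j : ℕ) < (k : ℕ) then (0 : ℝ)
         else if (k : ℕ) = (j : ℕ) then (a : ℝ) + b - 1
         else (2 ^ ((j : ℕ) - (k : ℕ)) * (b : ℝ) + a) * (Nat.choose (j : ℕ) (k : ℕ) : ℝ)) * v j)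
      = 2 * ((Nat.choose d (k : ℕ) : ℝ) * 2 ^ (d - (k : ℕ))) := by
    intro k
    have := congrFun hv k
    simpa [Matrix.mulVec, dotProduct, Matrix.of_apply] using this
  have hcol : ∀ (j : Fin (d + 1)) (x : ℝ),
      (∑ k : Fin (d + 1),
        (if (j : ℕ) < (k : ℕ) then (0 : ℝ)
         else if (k : ℕ) = (j : ℕ) then (a : ℝ) + b - 1
         else (2 ^ ((j : ℕ) - (k : ℕ)) * (b : ℝ) + a) * (Nat.choose (j : ℕ) (k : ℕ) : ℝ))
          * x ^ (k : ℕ))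
      = b * (x + 2) ^ (j : ℕ) + a * (x + 1) ^ (j : ℕ) - x ^ (j : ℕ) := by
    intro j x
    have hjd : (j : ℕ) < d + 1 := j.isLt
    rw [Fin.sum_univ_eq_sum_range (fun k =>
      (if (j : ℕ) < k then (0 : ℝ)
       else if k = (j : ℕ) then (a : ℝ) + b - 1
       else (2 ^ ((j : ℕ) - k) * (b : ℝ) + a) * (Nat.choose (j : ℕ) k : ℝ)) * x ^ k)]
    rw [← Finset.sum_subset (Finset.range_subset_range.2 hjd)
      (by
        intro k hk hk'
        simp only [Finset.mem_range] at hk hk'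
        rw [if_pos (by omega), zero_mul])]
    have hterm : ∀ k ∈ Finset.range ((j : ℕ) + 1),
        (if (j : ℕ) < k then (0 : ℝ)
         else if k = (j : ℕ) then (a : ℝ) + b - 1
         else (2 ^ ((j : ℕ) - k) * (b : ℝ) + a) * (Nat.choose (j : ℕ) k : ℝ)) * x ^ k
        = ((b : ℝ) * (x ^ k * 2 ^ ((j : ℕ) - k) * (Nat.choose (j : ℕ) k : ℝ))
           + (a : ℝ) * (x ^ k * 1 ^ ((j : ℕ) - k) * (Nat.choose (j : ℕ) k : ℝ)))
          - (if k = (j : ℕ) then x ^ (j : ℕ) else 0) := by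
      intro k hk
      rw [Finset.mem_range] at hk
      rw [if_neg (by omega)]
      by_cases h : k = (j : ℕ)
      · subst h
        simp only [if_true, ite_true, reduceIte, Nat.sub_self, pow_zero, Nat.choose_self,
          Nat.cast_one]
        ring
      · rw [if_neg h, if_neg h, one_pow]
        ring
    rw [Finset.sum_congr rfl hterm, Finset.sum_sub_distrib, Finset.sum_add_distrib,
      ← Finset.mul_sum, ← Finset.mul_sum, ← add_pow, ← add_pow,
      Finset.sum_ite_eq' (Finset.range ((j : ℕ) + 1)) (j : ℕ) (fun _ => x ^ (j : ℕ))]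
    simp
  have hkey : ∀ x : ℝ,
      (b : ℝ) * (∑ i : Fin (d + 1), v i * (x + 1 + 1) ^ (i : ℕ))
        + (a : ℝ) * (∑ i : Fin (d + 1), v i * (x + 1) ^ (i : ℕ))
        - (∑ i : Fin (d + 1), v i * x ^ (i : ℕ))
      = 2 * (x + 1 + 1) ^ d := by
    intro x
    have h2 : x + 1 + 1 = x + 2 := by ring
    rw [h2]
    calc (b : ℝ) * (∑ i : Fin (d + 1), v i * (x + 2) ^ (i : ℕ))
          + (a : ℝ) * (∑ i : Fin (d + 1), v i * (x + 1) ^ (i : ℕ))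
          - (∑ i : Fin (d + 1), v i * x ^ (i : ℕ))
        = ∑ j : Fin (d + 1),
            v j * ((b : ℝ) * (x + 2) ^ (j : ℕ) + a * (x + 1) ^ (j : ℕ) - x ^ (j : ℕ)) := by
          rw [Finset.mul_sum, Finset.mul_sum, ← Finset.sum_add_distrib,
            ← Finset.sum_sub_distrib]
          exact Finset.sum_congr rfl (fun i _ => by ring)
      _ = ∑ j : Fin (d + 1), v j *
            (∑ k : Fin (d + 1),
              (if (j : ℕ) < (k : ℕ) then (0 : ℝ)
               else if (k : ℕ) = (j : ℕ) then (a : ℝ) + b - 1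
               else (2 ^ ((j : ℕ) - (k : ℕ)) * (b : ℝ) + a) * (Nat.choose (j : ℕ) (k : ℕ) : ℝ))
                * x ^ (k : ℕ)) :=
          Finset.sum_congr rfl (fun j _ => by rw [hcol j x])
      _ = ∑ j : Fin (d + 1), ∑ k : Fin (d + 1),
            ((if (j : ℕ) < (k : ℕ) then (0 : ℝ)
              else if (k : ℕ) = (j : ℕ) then (a : ℝ) + b - 1
              else (2 ^ ((j : ℕ) - (k : ℕ)) * (b : ℝ) + a) * (Nat.choose (j : ℕ) (k : ℕ) : ℝ))
              * v j) * x ^ (k : ℕ) :=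
          Finset.sum_congr rfl (fun j _ => by
            rw [Finset.mul_sum]; exact Finset.sum_congr rfl (fun k _ => by ring))
      _ = ∑ k : Fin (d + 1), ∑ j : Fin (d + 1),
            ((if (j : ℕ) < (k : ℕ) then (0 : ℝ)
              else if (k : ℕ) = (j : ℕ) then (a : ℝ) + b - 1
              else (2 ^ ((j : ℕ) - (k : ℕ)) * (b : ℝ) + a) * (Nat.choose (j : ℕ) (k : ℕ) : ℝ))
              * v j) * x ^ (k : ℕ) := Finset.sum_comm
      _ = ∑ k : Fin (d + 1),
            (∑ j : Fin (d + 1),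
              (if (j : ℕ) < (k : ℕ) then (0 : ℝ)
               else if (k : ℕ) = (j : ℕ) then (a : ℝ) + b - 1
               else (2 ^ ((j : ℕ) - (k : ℕ)) * (b : ℝ) + a) * (Nat.choose (j : ℕ) (k : ℕ) : ℝ))
               * v j) * x ^ (k : ℕ) :=
          Finset.sum_congr rfl (fun k _ => by rw [Finset.sum_mul])
      _ = ∑ k : Fin (d + 1),
            (2 * ((Nat.choose d (k : ℕ) : ℝ) * 2 ^ (d - (k : ℕ)))) * x ^ (k : ℕ) :=
          Finset.sum_congr rfl (fun k _ => by rw [hM k])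
      _ = 2 * (x + 2) ^ d := by
          rw [add_pow, Finset.mul_sum,
            Fin.sum_univ_eq_sum_range (fun k =>
              (2 * ((Nat.choose d k : ℝ) * 2 ^ (d - k))) * x ^ k)]
          exact Finset.sum_congr rfl (fun k _ => by ring)
  intro n hn
  induction n, hn using Nat.le_induction with
  | base =>
      rw [Finset.Icc_self, Finset.sum_singleton]
      have h2 : s 2 = a * s 1 + b * s 0 := hrec 0
      have hsum2 : (∑ i : Fin (d + 1), (2 : ℝ) ^ (i : ℕ) * v i)
          = ∑ i : Fin (d + 1), v i * (2 : ℝ) ^ (i : ℕ) :=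
        Finset.sum_congr rfl (fun i _ => by ring)
      rw [hF, hG, hH, hsum2, h2, hs0, hs1]
      norm_num
      ring
  | succ n hn ih =>
      rw [Finset.sum_Icc_succ_top (by omega : 1 ≤ n + 1), mul_add, ih, hrec n]
      simp only [hF, hG, Nat.add_sub_cancel]
      push_cast
      linear_combination (-(s (n + 1))) * hkey (n : ℝ)
end

section
/- Let d be a nonnegative integer, a, b positive integers with a + b > 1, and let F(x) = ∑_{i=0}^d b_i(d)·x^i and G(x) = −2(x+1)^d + b·∑_{i=0}^d b_i(d)·(x+1)^i, where (b_0(d),…,b_d(d)) is the unique solution of the matrix equation B_d·(b_0,…,b_d)^T = 2·(C(d,0)2^d,…,C(d,d)2^0)^T. Then for all real x: F(x) − G(x+1) = a·F(x+1) and 2(x+1)^d + G(x) = b·F(x+1). -/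
open Finset

-- expansion lemma
lemma expand_aux (a b d : ℕ) (x : ℝ) (i : Fin (d+1)) :
    (a:ℝ)*(x+1)^(i:ℕ) + (b:ℝ)*(x+2)^(i:ℕ) - x^(i:ℕ)
    = ∑ k : Fin (d+1),
        (if (i:ℕ) < (k:ℕ) then (0:ℝ)
         else if (k:ℕ) = (i:ℕ) then (a:ℝ)+b-1
         else (2 ^ ((i:ℕ) - (k:ℕ)) * (b:ℝ) + a) * (Nat.choose (i:ℕ) (k:ℕ) : ℝ)) * x ^ (k:ℕ) := by
  obtain ⟨n, hn⟩ := i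
  simp only [Fin.val_mk] at *
  have hnd : n ≤ d := Nat.lt_succ_iff.mp hn
  rw [Fin.sum_univ_eq_sum_range (fun k =>
      (if n < k then (0:ℝ)
       else if k = n then (a:ℝ)+b-1
       else (2 ^ (n - k) * (b:ℝ) + a) * (Nat.choose n k : ℝ)) * x ^ k)]
  rw [← Finset.sum_subset (Finset.range_subset_range.mpr (by omega) :
        Finset.range (n+1) ⊆ Finset.range (d+1))
      (by intro k _ hk
          have : n < k := by simp at hk; omega
          simp [this])]
  have step : ∀ k ∈ Finset.range (n+1),
      (if n < k then (0:ℝ)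
       else if k = n then (a:ℝ)+b-1
       else (2 ^ (n - k) * (b:ℝ) + a) * (Nat.choose n k : ℝ)) * x ^ k
      = ((2 ^ (n - k) * (b:ℝ) + a) * (Nat.choose n k : ℝ)) * x ^ k
        - (if k = n then (1:ℝ) else 0) * x ^ k := by
    intro k hk
    have hkn : k ≤ n := by simp at hk; omega
    have : ¬ n < k := by omega
    rw [if_neg this]
    by_cases h : k = n
    · subst h
      simp [Nat.choose_self]
      ring
    · simp [h]
  rw [Finset.sum_congr rfl step, Finset.sum_sub_distrib]
  have h1 : ∑ k ∈ Finset.range (n+1), (if k = n then (1:ℝ) else 0) * x ^ k = x ^ n := by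
    rw [Finset.sum_eq_single n]
    · simp
    · intro k _ hk; simp [hk]
    · intro h; simp at h
  rw [h1]
  have h2 : (x+1)^n = ∑ k ∈ Finset.range (n+1), x ^ k * 1 ^ (n-k) * (Nat.choose n k : ℝ) :=
    add_pow x 1 n
  have h3 : (x+2)^n = ∑ k ∈ Finset.range (n+1), x ^ k * 2 ^ (n-k) * (Nat.choose n k : ℝ) :=
    add_pow x 2 n
  rw [h2, h3, Finset.mul_sum, Finset.mul_sum, ← Finset.sum_add_distrib]
  congr 1
  apply Finset.sum_congr rfl
  intro k _
  ring

theorem stmt_12 (a b : ℕ) (ha : 0 < a) (hb : 0 < b) (hab : 1 < a + b)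
    (d : ℕ) (v : Fin (d + 1) → ℝ)
    (hv : (Matrix.of fun i j : Fin (d + 1) =>
        if (j : ℕ) < (i : ℕ) then (0 : ℝ)
        else if (i : ℕ) = (j : ℕ) then (a : ℝ) + b - 1
        else (2 ^ ((j : ℕ) - (i : ℕ)) * (b : ℝ) + a) *
          (Nat.choose (j : ℕ) (i : ℕ) : ℝ)).mulVec v =
      fun k : Fin (d + 1) => 2 * ((Nat.choose d (k : ℕ) : ℝ) * 2 ^ (d - (k : ℕ))))
    (F G : ℝ → ℝ)
    (hF : ∀ x : ℝ, F x = ∑ i : Fin (d + 1), v i * x ^ (i : ℕ))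
    (hG : ∀ x : ℝ, G x = -2 * (x + 1) ^ d + (∑ i : Fin (d + 1), v i * (x + 1) ^ (i : ℕ)) * b) :
    ∀ x : ℝ, F x - G (x + 1) = a * F (x + 1) ∧ 2 * (x + 1) ^ d + G x = b * F (x + 1) := by
  intro x
  have hrow : ∀ k : Fin (d+1),
      (∑ j : Fin (d+1),
        (if (j:ℕ) < (k:ℕ) then (0:ℝ)
         else if (k:ℕ) = (j:ℕ) then (a:ℝ)+b-1
         else (2 ^ ((j:ℕ) - (k:ℕ)) * (b:ℝ) + a) * (Nat.choose (j:ℕ) (k:ℕ) : ℝ)) * v j)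
      = 2 * ((Nat.choose d (k:ℕ) : ℝ) * 2 ^ (d - (k:ℕ))) := by
    intro k
    have := congrFun hv k
    simpa [Matrix.mulVec, dotProduct] using this
  -- the key polynomial identity
  have swap : (a:ℝ) * (∑ i : Fin (d+1), v i * (x+1) ^ (i:ℕ))
      + (b:ℝ) * (∑ i : Fin (d+1), v i * (x+2) ^ (i:ℕ))
      - (∑ i : Fin (d+1), v i * x ^ (i:ℕ)) = 2 * (x+2)^d := by
    have lhs_eq : (a:ℝ) * (∑ i : Fin (d+1), v i * (x+1) ^ (i:ℕ))
        + (b:ℝ) * (∑ i : Fin (d+1), v i * (x+2) ^ (i:ℕ))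
        - (∑ i : Fin (d+1), v i * x ^ (i:ℕ))
        = ∑ i : Fin (d+1), v i * ((a:ℝ)*(x+1)^(i:ℕ) + (b:ℝ)*(x+2)^(i:ℕ) - x^(i:ℕ)) := by
      rw [Finset.mul_sum, Finset.mul_sum, ← Finset.sum_add_distrib, ← Finset.sum_sub_distrib]
      apply Finset.sum_congr rfl
      intro i _
      ring
    rw [lhs_eq]
    calc ∑ i : Fin (d+1), v i * ((a:ℝ)*(x+1)^(i:ℕ) + (b:ℝ)*(x+2)^(i:ℕ) - x^(i:ℕ))
        = ∑ i : Fin (d+1), ∑ k : Fin (d+1),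
            (if (i:ℕ) < (k:ℕ) then (0:ℝ)
             else if (k:ℕ) = (i:ℕ) then (a:ℝ)+b-1
             else (2 ^ ((i:ℕ) - (k:ℕ)) * (b:ℝ) + a) * (Nat.choose (i:ℕ) (k:ℕ) : ℝ)) * v i * x ^ (k:ℕ) := by
          apply Finset.sum_congr rfl
          intro i _
          rw [expand_aux a b d x i, Finset.mul_sum]
          apply Finset.sum_congr rfl
          intro k _
          ring
      _ = ∑ k : Fin (d+1), (∑ i : Fin (d+1),
            (if (i:ℕ) < (k:ℕ) then (0:ℝ)
             else if (k:ℕ) = (i:ℕ) then (a:ℝ)+b-1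
             else (2 ^ ((i:ℕ) - (k:ℕ)) * (b:ℝ) + a) * (Nat.choose (i:ℕ) (k:ℕ) : ℝ)) * v i) * x ^ (k:ℕ) := by
          rw [Finset.sum_comm]
          apply Finset.sum_congr rfl
          intro k _
          rw [Finset.sum_mul]
      _ = ∑ k : Fin (d+1), 2 * ((Nat.choose d (k:ℕ) : ℝ) * 2 ^ (d - (k:ℕ))) * x ^ (k:ℕ) := by
          apply Finset.sum_congr rfl
          intro k _
          rw [hrow k]
      _ = 2 * (x+2)^d := by
          rw [Fin.sum_univ_eq_sum_range (fun k =>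
            2 * ((Nat.choose d k : ℝ) * 2 ^ (d - k)) * x ^ k)]
          rw [add_pow x 2 d, Finset.mul_sum]
          apply Finset.sum_congr rfl
          intro k _
          ring
  constructor
  · rw [hF x, hG (x+1), hF (x+1)]
    have h2 : (x:ℝ) + 1 + 1 = x + 2 := by ring
    simp only [h2]
    linarith [swap]
  · rw [hG x, hF (x+1)]
    ring
end

section
/- Let (s_n) be the generalized Fibonacci sequence with a, b ∈ ℕ⁺, c_0, c_1 ∈ ℤ, (c_0,c_1) ≠ (0,0), and suppose both 2c_1 − j_1·c_0 ≠ 0 and 2c_1 − j_2·c_0 ≠ 0, where j_{1,2} = a ± √(a²+4b). If γ_1, γ_2, γ_3 are real polynomials with γ_1(n)·s_{n+1} + γ_2(n)·s_n + γ_3(n) = 0 for all positive integers n, then γ_1, γ_2, γ_3 are all zero polynomials. -/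
open Filter Polynomial Topology

private lemma polyTendsto (P : Polynomial ℝ) {r : ℝ} (hr : |r| < 1) :
    Tendsto (fun n : ℕ => P.eval (n : ℝ) * r ^ n) atTop (𝓝 0) := by
  induction P using Polynomial.induction_on' with
  | add p q hp hq =>
    have := hp.add hq
    simpa [add_mul] using this
  | monomial k c =>
    have := (tendsto_pow_const_mul_const_pow_of_abs_lt_one k hr).const_mul c
    simpa [Polynomial.eval_monomial, mul_assoc] using this

private lemma polyZero_of_tendsto (P : Polynomial ℝ)
    (h : Tendsto (fun n : ℕ => P.eval (n : ℝ)) atTop (𝓝 0)) : P = 0 := by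
  by_contra hP
  rcases le_or_gt P.degree 0 with hd | hd
  · have hc := Polynomial.degree_le_zero_iff.mp hd
    set c := P.coeff 0 with hcdef
    have h' : Tendsto (fun _ : ℕ => c) atTop (𝓝 0) := by
      refine h.congr fun n => ?_
      rw [hc]; simp
    have hc0 : c = 0 := tendsto_nhds_unique tendsto_const_nhds h'
    rw [hc, hc0] at hP
    simp at hP
  · have h1 : Tendsto (fun x : ℝ => |P.eval x|) atTop atTop :=
      Polynomial.abs_tendsto_atTop P hd
    have h2 : Tendsto (fun n : ℕ => |P.eval (n : ℝ)|) atTop atTop :=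
      h1.comp tendsto_natCast_atTop_atTop
    exact not_tendsto_atTop_of_tendsto_nhds h.abs h2

private lemma polyZero_of_eval (P : Polynomial ℝ) (f : ℕ → ℕ) (hf : StrictMono f)
    (h : ∀ m : ℕ, P.eval ((f m : ℕ) : ℝ) = 0) : P = 0 := by
  apply Polynomial.eq_zero_of_infinite_isRoot
  apply Set.infinite_of_injective_forall_mem
    (f := fun m : ℕ => ((f m : ℕ) : ℝ))
  · intro m m' hmm'
    simp only at hmm'
    exact hf.injective (by exact_mod_cast hmm')
  · intro m
    exact h m

set_option maxHeartbeats 1000000 in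
theorem stmt_15 (a b : ℕ) (ha : 0 < a) (hb : 0 < b) (c0 c1 : ℤ)
    (hc : (c0, c1) ≠ (0, 0)) (s : ℕ → ℝ)
    (hs0 : s 0 = c0) (hs1 : s 1 = c1)
    (hrec : ∀ n : ℕ, s (n + 2) = a * s (n + 1) + b * s n)
    (h1 : 2 * (c1 : ℝ) - ((a : ℝ) + Real.sqrt ((a : ℝ) ^ 2 + 4 * b)) * c0 ≠ 0)
    (h2 : 2 * (c1 : ℝ) - ((a : ℝ) - Real.sqrt ((a : ℝ) ^ 2 + 4 * b)) * c0 ≠ 0)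
    (γ1 γ2 γ3 : Polynomial ℝ)
    (hγ : ∀ n : ℕ, 1 ≤ n →
      γ1.eval (n : ℝ) * s (n + 1) + γ2.eval (n : ℝ) * s n + γ3.eval (n : ℝ) = 0) :
    γ1 = 0 ∧ γ2 = 0 ∧ γ3 = 0 := by
  have ha' : (1:ℝ) ≤ (a:ℝ) := by exact_mod_cast ha
  have hb' : (1:ℝ) ≤ (b:ℝ) := by exact_mod_cast hb
  set d : ℝ := Real.sqrt ((a : ℝ) ^ 2 + 4 * b) with hddef
  have hd2 : d ^ 2 = (a:ℝ)^2 + 4*b := Real.sq_sqrt (by positivity)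
  have hdnn : 0 ≤ d := Real.sqrt_nonneg _
  have hda : (a:ℝ) < d := by nlinarith
  have hdpos : 0 < d := lt_of_le_of_lt (by positivity) hda
  set r1 : ℝ := ((a:ℝ) + d)/2 with hr1def
  set r2 : ℝ := ((a:ℝ) - d)/2 with hr2def
  have hr1sq : r1 ^ 2 = a * r1 + b := by rw [hr1def]; field_simp; nlinarith
  have hr2sq : r2 ^ 2 = a * r2 + b := by rw [hr2def]; field_simp; nlinarith
  have hr1gt1 : 1 < r1 := by rw [hr1def]; nlinarith
  have hr1pos : 0 < r1 := lt_trans one_pos hr1gt1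
  have hr2neg : r2 < 0 := by rw [hr2def]; nlinarith
  have habs : |r2| < r1 := by
    rw [abs_of_neg hr2neg, hr1def, hr2def]; nlinarith
  set A : ℝ := ((c1:ℝ) - r2 * c0)/d with hAdef
  set B : ℝ := (r1 * (c0:ℝ) - c1)/d with hBdef
  have hA : A ≠ 0 := by
    rw [hAdef]
    apply div_ne_zero _ hdpos.ne'
    intro h
    apply h2
    rw [hr2def] at h
    linarith [h]
  have hB : B ≠ 0 := by
    rw [hBdef]
    apply div_ne_zero _ hdpos.ne'
    intro h
    apply h1
    rw [hr1def] at h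
    linarith [h]
  -- Binet formula
  have binet : ∀ n : ℕ, s n = A * r1 ^ n + B * r2 ^ n := by
    have key : ∀ n : ℕ, s n = A * r1 ^ n + B * r2 ^ n ∧
        s (n+1) = A * r1 ^ (n+1) + B * r2 ^ (n+1) := by
      intro n
      induction n with
      | zero =>
        constructor
        · rw [hs0, hAdef, hBdef]
          field_simp
          rw [hr1def, hr2def]
          ring
        · rw [hs1, hAdef, hBdef]
          field_simp
          rw [hr1def, hr2def]
          ring
      | succ k ih =>
        refine ⟨ih.2, ?_⟩
        rw [hrec k, ih.1, ih.2]
        have e1 : r1 ^ (k+2) = r1 ^ k * (a * r1 + b) := by rw [← hr1sq]; ring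
        have e2 : r2 ^ (k+2) = r2 ^ k * (a * r2 + b) := by rw [← hr2sq]; ring
        rw [e1, e2]; ring
    exact fun n => (key n).1
  set Q1 : Polynomial ℝ := Polynomial.C (A*r1) * γ1 + Polynomial.C A * γ2 with hQ1def
  set Q2 : Polynomial ℝ := Polynomial.C (B*r2) * γ1 + Polynomial.C B * γ2 with hQ2def
  clear_value d r1 r2 A B Q1 Q2
  have key : ∀ n : ℕ, 1 ≤ n →
      Q1.eval (n:ℝ) * r1 ^ n + Q2.eval (n:ℝ) * r2 ^ n + γ3.eval (n:ℝ) = 0 := by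
    intro n hn
    have h := hγ n hn
    rw [binet n, binet (n+1)] at h
    simp only [hQ1def, hQ2def, Polynomial.eval_add, Polynomial.eval_mul, Polynomial.eval_C]
    rw [pow_succ, pow_succ] at h
    linear_combination h
  -- Step 1: Q1 = 0
  have hQ1 : Q1 = 0 := by
    apply polyZero_of_tendsto
    have hrq : |r2 / r1| < 1 := by
      rw [abs_div, abs_of_pos hr1pos]
      exact (div_lt_one hr1pos).mpr habs
    have hr1inv : |1 / r1| < 1 := by
      rw [abs_div, abs_of_pos hr1pos, abs_one]
      exact (div_lt_one hr1pos).mpr hr1gt1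
    have hlim : Tendsto (fun n : ℕ =>
        -(Q2.eval (n:ℝ) * (r2/r1) ^ n + γ3.eval (n:ℝ) * (1/r1) ^ n)) atTop (𝓝 0) := by
      have := (polyTendsto Q2 hrq).add (polyTendsto γ3 hr1inv)
      simpa only [add_zero, neg_zero] using this.neg
    refine hlim.congr' ?_
    filter_upwards [eventually_ge_atTop 1] with n hn
    have hk := key n hn
    have hpow : r1 ^ n ≠ 0 := pow_ne_zero _ hr1pos.ne'
    have e : Q2.eval (n:ℝ) * (r2/r1) ^ n + γ3.eval (n:ℝ) * (1/r1) ^ n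
        = (Q2.eval (n:ℝ) * r2 ^ n + γ3.eval (n:ℝ)) / r1 ^ n := by
      rw [div_pow, div_pow, one_pow]
      ring
    rw [e, ← neg_div, div_eq_iff hpow]
    linear_combination -hk
  have hrel1 : Polynomial.C r1 * γ1 + γ2 = 0 := by
    have : Polynomial.C A * (Polynomial.C r1 * γ1 + γ2) = 0 := by
      rw [← hQ1, hQ1def, Polynomial.C_mul]; ring
    rcases mul_eq_zero.mp this with h | h
    · exact absurd (Polynomial.C_eq_zero.mp h) hA
    · exact h
  have key2 : ∀ n : ℕ, 1 ≤ n → Q2.eval (n:ℝ) * r2 ^ n + γ3.eval (n:ℝ) = 0 := by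
    intro n hn
    have hk := key n hn
    rw [hQ1] at hk
    simpa using hk
  -- Step 2: Q2 = 0 and γ3 = 0
  have hstep2 : Q2 = 0 ∧ γ3 = 0 := by
    rcases lt_trichotomy r2 (-1) with hr | hr | hr
    · -- |r2| > 1
      have hQ2 : Q2 = 0 := by
        apply polyZero_of_tendsto
        have hinv : |1 / r2| < 1 := by
          rw [abs_div, abs_one, abs_of_neg hr2neg]
          rw [div_lt_one (by linarith)]; linarith
        have hlim : Tendsto (fun n : ℕ => -(γ3.eval (n:ℝ) * (1/r2) ^ n)) atTop (𝓝 0) := by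
          simpa only [neg_zero] using (polyTendsto γ3 hinv).neg
        refine hlim.congr' ?_
        filter_upwards [eventually_ge_atTop 1] with n hn
        have hk := key2 n hn
        have hpow : r2 ^ n ≠ 0 := pow_ne_zero _ hr2neg.ne
        have e : γ3.eval (n:ℝ) * (1/r2) ^ n = γ3.eval (n:ℝ) / r2 ^ n := by
          rw [div_pow, one_pow]
          ring
        rw [e, ← neg_div, div_eq_iff hpow]
        linear_combination -hk
      refine ⟨hQ2, ?_⟩
      apply polyZero_of_eval γ3 (fun m => m + 1) (fun x y h => by dsimp only; omega)
      intro m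
      have hk := key2 (m+1) (by omega)
      rw [hQ2] at hk
      simpa using hk
    · -- r2 = -1
      have hsum : Q2 + γ3 = 0 := by
        apply polyZero_of_eval _ (fun m => 2*m + 2) (fun x y h => by dsimp only; omega)
        intro m
        have hk := key2 (2*m+2) (by omega)
        rw [hr] at hk
        have : (-1:ℝ) ^ (2*m+2) = 1 := by
          rw [show 2*m+2 = 2*(m+1) by ring, pow_mul]; norm_num
        rw [this] at hk
        simpa using hk
      have hdiff : γ3 - Q2 = 0 := by
        apply polyZero_of_eval _ (fun m => 2*m + 1) (fun x y h => by dsimp only; omega)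
        intro m
        have hk := key2 (2*m+1) (by omega)
        rw [hr] at hk
        have : (-1:ℝ) ^ (2*m+1) = -1 := by
          rw [pow_succ, pow_mul]; norm_num
        rw [this] at hk
        simp only [Polynomial.eval_sub]
        linarith [hk]
      constructor
      · have : (2:ℝ) • Q2 = (Q2 + γ3) - (γ3 - Q2) := by module
        have h2Q : (2:ℝ) • Q2 = 0 := by rw [this, hsum, hdiff]; ring
        have := smul_eq_zero.mp h2Q
        rcases this with h | h
        · norm_num at h
        · exact h
      · have : (2:ℝ) • γ3 = (Q2 + γ3) + (γ3 - Q2) := by module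
        have h2Q : (2:ℝ) • γ3 = 0 := by rw [this, hsum, hdiff]; ring
        rcases smul_eq_zero.mp h2Q with h | h
        · norm_num at h
        · exact h
    · -- |r2| < 1
      have habs2 : |r2| < 1 := by rw [abs_of_neg hr2neg]; linarith
      have hγ3 : γ3 = 0 := by
        apply polyZero_of_tendsto
        have hlim : Tendsto (fun n : ℕ => -(Q2.eval (n:ℝ) * r2 ^ n)) atTop (𝓝 0) := by
          simpa only [neg_zero] using (polyTendsto Q2 habs2).neg
        refine hlim.congr' ?_
        filter_upwards [eventually_ge_atTop 1] with n hn
        have hk := key2 n hn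
        linarith [hk]
      refine ⟨?_, hγ3⟩
      apply polyZero_of_eval Q2 (fun m => m + 1) (fun x y h => by dsimp only; omega)
      intro m
      have hk := key2 (m+1) (by omega)
      rw [hγ3] at hk
      simp only [Polynomial.eval_zero, add_zero] at hk
      have hpow : r2 ^ (m+1) ≠ 0 := pow_ne_zero _ hr2neg.ne
      exact (mul_eq_zero.mp hk).resolve_right hpow
  obtain ⟨hQ2, hγ3⟩ := hstep2
  have hrel2 : Polynomial.C r2 * γ1 + γ2 = 0 := by
    have : Polynomial.C B * (Polynomial.C r2 * γ1 + γ2) = 0 := by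
      rw [← hQ2, hQ2def, Polynomial.C_mul]; ring
    rcases mul_eq_zero.mp this with h | h
    · exact absurd (Polynomial.C_eq_zero.mp h) hB
    · exact h
  have hγ1 : γ1 = 0 := by
    have hsub : Polynomial.C (r1 - r2) * γ1 = 0 := by
      have := sub_eq_zero.mpr (hrel1.trans hrel2.symm)
      rw [Polynomial.C_sub]
      linear_combination this
    rcases mul_eq_zero.mp hsub with h | h
    · exfalso
      have : r1 - r2 = 0 := Polynomial.C_eq_zero.mp h
      have : r2 < r1 := lt_trans hr2neg hr1pos
      linarith
    · exact h
  have hγ2 : γ2 = 0 := by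
    have := hrel1
    rw [hγ1] at this
    simpa using this
  exact ⟨hγ1, hγ2, hγ3⟩
end

section
/- Let (s_n) be the generalized Fibonacci sequence with a, b ∈ ℕ⁺, c_0, c_1 ∈ ℤ, (c_0,c_1) ≠ (0,0), and suppose 2c_1 − j_1·c_0 = 0, where j_1 = a + √(a²+4b). If γ_1, γ_2, γ_3 are real polynomials with γ_1(n)·s_{n+1} + γ_2(n)·s_n + γ_3(n) = 0 for all positive integers n, then γ_2 = −(j_1/2)·γ_1 (as polynomials) and γ_3 is the zero polynomial. -/
open Filter Polynomial

lemma aux_poly_zero (P : Polynomial ℝ)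
    (h : Tendsto (fun n : ℕ => P.eval (n : ℝ)) atTop (nhds 0)) : P = 0 := by
  by_contra hP
  rcases lt_or_ge 0 P.degree with hdeg | hdeg
  · have h2 : Tendsto (fun n : ℕ => |P.eval (n : ℝ)|) atTop atTop :=
      (Polynomial.abs_tendsto_atTop P hdeg).comp tendsto_natCast_atTop_atTop
    exact not_tendsto_nhds_of_tendsto_atTop h2 0 (by simpa using h.abs)
  · have hC := Polynomial.degree_le_zero_iff.mp hdeg
    have h2 : Tendsto (fun n : ℕ => P.eval (n : ℝ)) atTop (nhds (P.coeff 0)) := by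
      refine tendsto_const_nhds.congr fun n => ?_
      conv_rhs => rw [hC]
      simp
    have hc0 : P.coeff 0 = 0 := tendsto_nhds_unique h2 h
    rw [hC, hc0] at hP
    simp at hP

lemma aux_div_tendsto (P : Polynomial ℝ) {r : ℝ} (hr : 1 < r) :
    Tendsto (fun n : ℕ => P.eval (n : ℝ) / r ^ n) atTop (nhds 0) := by
  have : ∀ n : ℕ, P.eval (n : ℝ) / r ^ n
      = ∑ i ∈ Finset.range (P.natDegree + 1), P.coeff i * ((n : ℝ) ^ i / r ^ n) := by
    intro n
    rw [Polynomial.eval_eq_sum_range, Finset.sum_div]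
    congr 1; ext i; ring
  rw [funext this]
  have : (0 : ℝ) = ∑ i ∈ Finset.range (P.natDegree + 1), P.coeff i * 0 := by simp
  rw [this]
  exact tendsto_finset_sum _ fun i _ =>
    (tendsto_pow_const_div_const_pow_of_one_lt i hr).const_mul _

theorem stmt_16 (a b : ℕ) (ha : 0 < a) (hb : 0 < b) (c0 c1 : ℤ)
    (hc : (c0, c1) ≠ (0, 0)) (s : ℕ → ℝ)
    (hs0 : s 0 = c0) (hs1 : s 1 = c1)
    (hrec : ∀ n : ℕ, s (n + 2) = a * s (n + 1) + b * s n)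
    (h1 : 2 * (c1 : ℝ) - ((a : ℝ) + Real.sqrt ((a : ℝ) ^ 2 + 4 * b)) * c0 = 0)
    (γ1 γ2 γ3 : Polynomial ℝ)
    (hγ : ∀ n : ℕ, 1 ≤ n →
      γ1.eval (n : ℝ) * s (n + 1) + γ2.eval (n : ℝ) * s n + γ3.eval (n : ℝ) = 0) :
    γ2 = Polynomial.C (-(((a : ℝ) + Real.sqrt ((a : ℝ) ^ 2 + 4 * b)) / 2)) * γ1 ∧
      γ3 = 0 := by
  set d : ℝ := Real.sqrt ((a : ℝ) ^ 2 + 4 * b) with hd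
  have hd2 : d ^ 2 = (a : ℝ) ^ 2 + 4 * b := Real.sq_sqrt (by positivity)
  have hda : (a : ℝ) < d := by
    nlinarith [Real.sqrt_nonneg ((a : ℝ) ^ 2 + 4 * b), (by exact_mod_cast hb : (0:ℝ) < b),
      (by exact_mod_cast ha : (0:ℝ) < a)]
  set r : ℝ := ((a : ℝ) + d) / 2 with hr
  have hr1 : 1 < r := by
    have : (1 : ℝ) ≤ a := by exact_mod_cast ha
    rw [hr]; nlinarith
  have hrq : r ^ 2 = a * r + b := by rw [hr]; nlinarith
  -- s (n+1) = r * s n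
  have hstep : ∀ n : ℕ, s (n + 1) = r * s n := by
    intro n
    induction n with
    | zero =>
      rw [hs0, hs1]
      have : (c1 : ℝ) = r * c0 := by rw [hr]; linarith
      simpa using this
    | succ k ih =>
      have := hrec k
      rw [this, ih]
      linear_combination (-(s k)) * hrq
  have hsn : ∀ n : ℕ, s n = c0 * r ^ n := by
    intro n
    induction n with
    | zero => simpa using hs0
    | succ k ih => rw [hstep k, ih]; ring
  have hc0 : (c0 : ℝ) ≠ 0 := by
    intro h0
    have hc0z : c0 = 0 := by exact_mod_cast h0
    have : (c1 : ℝ) = 0 := by rw [h0] at h1; linarith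
    exact hc (by simp [hc0z, (by exact_mod_cast this : c1 = 0)])
  -- key polynomial
  set P : Polynomial ℝ := Polynomial.C ((c0 : ℝ) * r) * γ1 + Polynomial.C (c0 : ℝ) * γ2
    with hP
  have hkey : ∀ n : ℕ, 1 ≤ n → P.eval (n : ℝ) * r ^ n + γ3.eval (n : ℝ) = 0 := by
    intro n hn
    have := hγ n hn
    rw [hsn n, hsn (n + 1)] at this
    rw [hP]; simp only [Polynomial.eval_add, Polynomial.eval_mul, Polynomial.eval_C]
    rw [pow_succ] at this
    nlinarith [this]
  have hrpos : ∀ n : ℕ, (0 : ℝ) < r ^ n := fun n => pow_pos (by linarith) n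
  have hPev : Tendsto (fun n : ℕ => P.eval (n : ℝ)) atTop (nhds 0) := by
    have h3 : Tendsto (fun n : ℕ => -(γ3.eval (n : ℝ) / r ^ n)) atTop (nhds 0) := by
      simpa using (aux_div_tendsto γ3 hr1).neg
    refine Tendsto.congr' ?_ h3
    filter_upwards [eventually_ge_atTop 1] with n hn
    have := hkey n hn
    field_simp
    linarith
  have hP0 : P = 0 := aux_poly_zero P hPev
  have hγ30 : γ3 = 0 := by
    apply aux_poly_zero
    have : ∀ᶠ n : ℕ in atTop, γ3.eval (n : ℝ) = 0 := by
      filter_upwards [eventually_ge_atTop 1] with n hn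
      have hk := hkey n hn
      rw [hP0] at hk
      simpa using hk
    refine Tendsto.congr' ?_ tendsto_const_nhds
    filter_upwards [this] with n h using h.symm
  refine ⟨?_, hγ30⟩
  have : Polynomial.C ((c0 : ℝ) * r) * γ1 + Polynomial.C (c0 : ℝ) * γ2 = 0 := hP0
  rw [Polynomial.C_mul] at this
  have h2 : Polynomial.C (c0 : ℝ) * (γ2 - Polynomial.C (-r) * γ1) = 0 := by
    rw [map_neg]
    linear_combination this
  rcases mul_eq_zero.mp h2 with h | h
  · exact absurd (Polynomial.C_eq_zero.mp h) hc0
  · linear_combination h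
end

section
/- Let (s_n) be the generalized Fibonacci sequence with a, b ∈ ℕ⁺ (a + b > 1), c_0, c_1 ∈ ℤ, (c_0,c_1) ≠ (0,0). For every polynomial P(x) ∈ ℝ[x], there exist polynomials F_1, G_1, H_1 ∈ ℝ[x] such that 2·∑_{k=1}^n P(k)·s_{k−1} = F_1(n)·s_{n+1} + G_1(n)·s_n + H_1(n) for all positive integers n. -/
open Polynomial

lemma key_exists (a b : ℝ) (h : a + b - 1 ≠ 0) :
    ∀ d : ℕ, ∀ P : ℝ[X], P.natDegree ≤ d →
      ∃ f : ℝ[X], C b * f + C a * f.comp (X - C 1) - f.comp (X - C 2) = P := by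
  intro d
  induction d with
  | zero =>
    intro P hP
    refine ⟨C (P.coeff 0 / (a + b - 1)), ?_⟩
    have hPC : P = C (P.coeff 0) := Polynomial.eq_C_of_natDegree_le_zero hP
    rw [C_comp, C_comp, ← C_mul, ← C_mul, ← C_add, ← C_sub]
    conv_rhs => rw [hPC]
    congr 1
    field_simp
    ring
  | succ d ih =>
    intro P hP
    set e := P.coeff (d + 1) / (a + b - 1) with he
    set f0 : ℝ[X] := C e * X ^ (d + 1) with hf0
    have hcomp : ∀ r : ℝ, f0.comp (X - C r) = C e * (X - C r) ^ (d + 1) := by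
      intro r
      simp [hf0, mul_comp, pow_comp]
    have hdegc : ∀ r : ℝ, (f0.comp (X - C r)).natDegree ≤ d + 1 := by
      intro r
      rw [hcomp r]
      calc (C e * (X - C r) ^ (d + 1)).natDegree
          ≤ (C e).natDegree + ((X - C r) ^ (d + 1)).natDegree := natDegree_mul_le
        _ ≤ d + 1 := by
            simp [natDegree_pow, natDegree_X_sub_C]
    have hcoefc : ∀ r : ℝ, (f0.comp (X - C r)).coeff (d + 1) = e := by
      intro r
      rw [hcomp r, coeff_C_mul]
      have hm : ((X - C r) ^ (d + 1)).Monic := (monic_X_sub_C r).pow _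
      have hd : ((X - C r) ^ (d + 1)).natDegree = d + 1 := by
        simp [natDegree_pow, natDegree_X_sub_C]
      have := hm.coeff_natDegree
      rw [hd] at this
      rw [this, mul_one]
    have hf0deg : f0.natDegree ≤ d + 1 := by
      calc f0.natDegree ≤ (C e).natDegree + (X ^ (d + 1) : ℝ[X]).natDegree :=
            natDegree_mul_le
        _ ≤ d + 1 := by simp
    have hf0coef : f0.coeff (d + 1) = e := by
      simp [hf0, coeff_C_mul]
    set Q : ℝ[X] := P - (C b * f0 + C a * f0.comp (X - C 1) - f0.comp (X - C 2)) with hQ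
    have hQdeg : Q.natDegree ≤ d := by
      rw [Polynomial.natDegree_le_iff_coeff_eq_zero]
      intro m hm
      have hm1 : d + 1 ≤ m := hm
      rcases eq_or_lt_of_le hm1 with heq | hlt
      · subst heq
        simp only [hQ, coeff_sub, coeff_add, coeff_C_mul, hf0coef, hcoefc]
        have : P.coeff (d + 1) = (a + b - 1) * e := by
          rw [he]; field_simp
        rw [this]; ring
      · have h1 : P.coeff m = 0 := coeff_eq_zero_of_natDegree_lt (lt_of_le_of_lt hP hlt)
        have h2 : f0.coeff m = 0 := coeff_eq_zero_of_natDegree_lt (lt_of_le_of_lt hf0deg hlt)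
        have h3 : (f0.comp (X - C 1)).coeff m = 0 :=
          coeff_eq_zero_of_natDegree_lt (lt_of_le_of_lt (hdegc 1) hlt)
        have h4 : (f0.comp (X - C 2)).coeff m = 0 :=
          coeff_eq_zero_of_natDegree_lt (lt_of_le_of_lt (hdegc 2) hlt)
        have hx : ((X : ℝ[X]) ^ (d + 1)).coeff m = 0 := by
          rw [coeff_X_pow]; exact if_neg (by omega)
        simp only [hQ, coeff_sub, coeff_add, coeff_C_mul, h1, h2, h3, h4, hx]
        ring
    obtain ⟨f1, hf1⟩ := ih Q hQdeg
    refine ⟨f0 + f1, ?_⟩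
    simp only [add_comp]
    rw [hQ] at hf1
    linear_combination hf1

theorem stmt_17 (a b : ℕ) (ha : 0 < a) (hb : 0 < b) (hab : 1 < a + b)
    (c0 c1 : ℤ) (hc : (c0, c1) ≠ (0, 0)) (s : ℕ → ℝ)
    (hs0 : s 0 = c0) (hs1 : s 1 = c1)
    (hrec : ∀ n : ℕ, s (n + 2) = a * s (n + 1) + b * s n)
    (P : Polynomial ℝ) :
    ∃ F1 G1 H1 : Polynomial ℝ, ∀ n : ℕ, 1 ≤ n →
      2 * ∑ k ∈ Finset.Icc 1 n, P.eval (k : ℝ) * s (k - 1) =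
        F1.eval (n : ℝ) * s (n + 1) + G1.eval (n : ℝ) * s n + H1.eval (n : ℝ) := by
  have hab' : (a : ℝ) + b - 1 ≠ 0 := by
    have h2 : (2 : ℝ) ≤ (a : ℝ) + b := by exact_mod_cast hab
    linarith
  obtain ⟨f, hf⟩ := key_exists (a : ℝ) (b : ℝ) hab' P.natDegree P le_rfl
  set g : ℝ[X] := f.comp (X - C 1) - C (a : ℝ) * f with hg
  have hgeval : ∀ x : ℝ, g.eval x = f.eval (x - 1) - a * f.eval x := by
    intro x; simp [hg, eval_comp]
  have hfeval : ∀ x : ℝ, b * f.eval x + a * f.eval (x - 1) - f.eval (x - 2) = P.eval x := by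
    intro x
    have := congrArg (Polynomial.eval x) hf
    simpa [eval_comp] using this
  set K : ℝ := f.eval 0 * s 1 + g.eval 0 * s 0 with hK
  have main : ∀ n : ℕ, ∑ k ∈ Finset.Icc 1 n, P.eval (k : ℝ) * s (k - 1) =
      f.eval (n : ℝ) * s (n + 1) + g.eval (n : ℝ) * s n - K := by
    intro n
    induction n with
    | zero => simp [hK]
    | succ n ih =>
      rw [Finset.sum_Icc_succ_top (Nat.le_add_left 1 n), ih]
      have hrec' : s (n + 1 + 1) = a * s (n + 1) + b * s n := hrec n
      rw [hrec']
      have h1 := hfeval ((n : ℝ) + 1)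
      have h2 := hgeval ((n : ℝ) + 1)
      have h3 := hgeval (n : ℝ)
      rw [show (n : ℝ) + 1 - 1 = (n : ℝ) by ring, show (n : ℝ) + 1 - 2 = (n : ℝ) - 1 by ring] at h1
      rw [show (n : ℝ) + 1 - 1 = (n : ℝ) by ring] at h2
      push_cast
      linear_combination (-(s (n+1))) * h2 + (s n) * h3 + (-(s n)) * h1
  refine ⟨C 2 * f, C 2 * g, C (-2 * K), ?_⟩
  intro n hn
  rw [main n]
  simp only [eval_mul, eval_C, eval_neg]
  ring
end

section
/- Let (s_n) be the generalized Fibonacci sequence with a, b ∈ ℕ⁺ (a + b > 1), c_0, c_1 ∈ ℤ, (c_0,c_1) ≠ (0,0), and assume both 2c_1 − j_1·c_0 and 2c_1 − j_2·c_0 are nonzero, where j_{1,2} = a ± √(a²+4b). Then for every polynomial P ∈ ℝ[x], the triple (F_1, G_1, H_1) ∈ ℝ[x]³ satisfying 2·∑_{k=1}^n P(k)·s_{k−1} = F_1(n)·s_{n+1} + G_1(n)·s_n + H_1(n) for all positive integers n is unique. -/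
open Polynomial Filter Topology


lemma aux_zero_of_evals (p : ℝ[X]) (g : ℕ → ℝ) (hg : StrictMono g)
    (h : ∀ n, p.eval (g n) = 0) : p = 0 := by
  apply p.eq_zero_of_infinite_isRoot
  exact Set.infinite_of_injective_forall_mem (f := g) hg.injective h

lemma aux_zero_of_tendsto (p : ℝ[X])
    (h : Tendsto (fun n : ℕ => p.eval (n : ℝ)) atTop (𝓝 0)) : p = 0 := by
  rcases lt_or_ge 0 p.degree with hd | hd
  · exfalso
    have h1 : Tendsto (fun n : ℕ => |p.eval (n : ℝ)|) atTop atTop :=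
      (Polynomial.abs_tendsto_atTop p hd).comp (tendsto_natCast_atTop_atTop (R := ℝ))
    have h2 : Tendsto (fun n : ℕ => |p.eval (n : ℝ)|) atTop (𝓝 0) := by
      simpa using h.abs
    exact not_tendsto_nhds_of_tendsto_atTop h1 0 h2
  · have hc := Polynomial.eq_C_of_degree_le_zero hd
    have : Tendsto (fun _ : ℕ => p.coeff 0) atTop (𝓝 0) := by
      refine h.congr fun n => ?_
      rw [hc]; simp
    have := tendsto_nhds_unique this tendsto_const_nhds
    rw [hc, ← this]; simp

lemma aux_tendsto_poly_mul (p : ℝ[X]) {r : ℝ} (hr : |r| < 1) :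
    Tendsto (fun n : ℕ => p.eval (n : ℝ) * r ^ n) atTop (𝓝 0) := by
  induction p using Polynomial.induction_on' with
  | add p q hp hq => simpa [add_mul] using hp.add hq
  | monomial k c =>
      have := (tendsto_pow_const_mul_const_pow_of_abs_lt_one k hr).const_mul c
      simpa [mul_assoc] using this

lemma aux_core (r1 r2 α β : ℝ) (h11 : 1 < r1) (h21 : |r2| < r1) (hr2 : r2 < 0)
    (hα : α ≠ 0) (hβ : β ≠ 0) (F G H : ℝ[X])
    (hz : ∀ n : ℕ, 1 ≤ n →
      F.eval (n : ℝ) * (α * r1 ^ (n + 1) + β * r2 ^ (n + 1)) +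
        G.eval (n : ℝ) * (α * r1 ^ n + β * r2 ^ n) + H.eval (n : ℝ) = 0) :
    F = 0 ∧ G = 0 ∧ H = 0 := by
  have hr1pos : (0 : ℝ) < r1 := by linarith
  set A : ℝ[X] := C r1 * F + G with hA
  set B : ℝ[X] := C r2 * F + G with hB
  have hz' : ∀ n : ℕ, 1 ≤ n →
      α * A.eval (n : ℝ) * r1 ^ n + β * B.eval (n : ℝ) * r2 ^ n + H.eval (n : ℝ) = 0 := by
    intro n hn
    have h := hz n hn
    simp only [hA, hB, eval_add, eval_mul, eval_C]
    linear_combination h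
  -- Step 1 : A = 0
  have hA0 : A = 0 := by
    apply aux_zero_of_tendsto
    have l1 := (aux_tendsto_poly_mul B (r := r2 / r1)
      (by rw [abs_div, abs_of_pos hr1pos]; exact (div_lt_one hr1pos).2 h21)).const_mul β
    have l2 := aux_tendsto_poly_mul H (r := 1 / r1)
      (by rw [abs_div, abs_one, abs_of_pos hr1pos]; exact (div_lt_one hr1pos).2 h11)
    have t1 : Tendsto
        (fun n : ℕ => (1 / α) * -(β * (B.eval (n : ℝ) * (r2 / r1) ^ n) + H.eval (n : ℝ) * (1 / r1) ^ n))
        atTop (𝓝 0) := by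
      simpa using ((l1.add l2).neg).const_mul (1 / α)
    refine Tendsto.congr' ?_ t1
    filter_upwards [eventually_ge_atTop 1] with n hn
    have h := hz' n hn
    have hr1n : r1 ^ n ≠ 0 := pow_ne_zero _ (ne_of_gt hr1pos)
    have hAn : A.eval (n : ℝ) = -(β * B.eval (n : ℝ) * r2 ^ n + H.eval (n : ℝ)) / (α * r1 ^ n) := by
      rw [eq_div_iff (mul_ne_zero hα hr1n)]
      linear_combination h
    rw [hAn, div_pow, div_pow, one_pow]
    field_simp
  have hz2 : ∀ n : ℕ, 1 ≤ n → β * B.eval (n : ℝ) * r2 ^ n + H.eval (n : ℝ) = 0 := by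
    intro n hn
    have h := hz' n hn
    rw [hA0] at h
    simpa using h
  have hgS : StrictMono (fun n : ℕ => ((n : ℝ) + 1)) := by
    intro m n h
    simp only [add_lt_add_iff_right, Nat.cast_lt]
    exact h
  -- Step 2 : B = 0 ∧ H = 0, by cases on |r2|
  have hBH : B = 0 ∧ H = 0 := by
    rcases lt_trichotomy (|r2|) 1 with hlt | heq | hgt
    · have hH0 : H = 0 := by
        apply aux_zero_of_tendsto
        have t1 := (aux_tendsto_poly_mul B hlt).const_mul (-β)
        refine Tendsto.congr' ?_ (by simpa using t1)
        filter_upwards [eventually_ge_atTop 1] with n hn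
        have h := hz2 n hn
        linarith
      refine ⟨?_, hH0⟩
      apply aux_zero_of_evals B _ hgS
      intro n
      have h := hz2 (n + 1) (by omega)
      rw [hH0] at h
      simp only [eval_zero, add_zero] at h
      have hr2n : r2 ^ (n + 1) ≠ 0 := pow_ne_zero _ (ne_of_lt hr2)
      have hb : B.eval (((n + 1 : ℕ)) : ℝ) = 0 := by
        rcases mul_eq_zero.1 h with h' | h'
        · rcases mul_eq_zero.1 h' with h'' | h''
          · exact absurd h'' hβ
          · exact h''
        · exact absurd h' hr2n
      push_cast at hb
      exact hb
    · have hr2m1 : r2 = -1 := by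
        rw [abs_of_neg hr2] at heq; linarith
      have he : C β * B + H = 0 := by
        apply aux_zero_of_evals _ (fun m : ℕ => ((2 * m + 2 : ℕ) : ℝ))
        · intro m n h
          simp only [Nat.cast_lt]
          omega
        · intro m
          have h := hz2 (2 * m + 2) (by omega)
          rw [hr2m1] at h
          have : (-1 : ℝ) ^ (2 * m + 2) = 1 := Even.neg_one_pow ⟨m + 1, by ring⟩
          rw [this] at h
          simp only [eval_add, eval_mul, eval_C]
          linarith
      have ho : H - C β * B = 0 := by
        apply aux_zero_of_evals _ (fun m : ℕ => ((2 * m + 1 : ℕ) : ℝ))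
        · intro m n h
          simp only [Nat.cast_lt]
          omega
        · intro m
          have h := hz2 (2 * m + 1) (by omega)
          rw [hr2m1] at h
          have : (-1 : ℝ) ^ (2 * m + 1) = -1 := Odd.neg_one_pow ⟨m, by ring⟩
          rw [this] at h
          simp only [eval_sub, eval_add, eval_mul, eval_C]
          linarith
      have hH0 : H = 0 := by
        have : (2 : ℝ[X]) • H = 0 := by
          have := congrArg₂ (· + ·) he ho
          simp only [add_zero] at this
          rw [smul_eq_mul]
          linear_combination this
        simpa using this
      have hB0 : C β * B = 0 := by rw [hH0] at he; simpa using he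
      rcases mul_eq_zero.1 hB0 with h' | h'
      · exact absurd (C_eq_zero.1 h') hβ
      · exact ⟨h', hH0⟩
    · have hr2abspos : (0 : ℝ) < |r2| := by linarith
      have hB0 : B = 0 := by
        apply aux_zero_of_tendsto
        have l2 := (aux_tendsto_poly_mul H (r := 1 / r2)
          (by rw [abs_div, abs_one]; exact (div_lt_one hr2abspos).2 hgt)).const_mul (-(1 / β))
        refine Tendsto.congr' ?_ (by simpa using l2)
        filter_upwards [eventually_ge_atTop 1] with n hn
        have h := hz2 n hn
        have hr2n : r2 ^ n ≠ 0 := pow_ne_zero _ (ne_of_lt hr2)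
        have hBn : B.eval (n : ℝ) = -(H.eval (n : ℝ)) / (β * r2 ^ n) := by
          rw [eq_div_iff (mul_ne_zero hβ hr2n)]
          linear_combination h
        rw [hBn]
        field_simp
      refine ⟨hB0, ?_⟩
      apply aux_zero_of_evals H _ hgS
      intro n
      have h := hz2 (n + 1) (by omega)
      rw [hB0] at h
      push_cast at h ⊢
      simpa using h
  obtain ⟨hB0, hH0⟩ := hBH
  have hF0 : F = 0 := by
    have : C (r1 - r2) * F = 0 := by
      have := congrArg₂ (· - ·) hA0 hB0
      simp only [sub_zero] at this
      rw [hA, hB] at this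
      rw [C_sub]
      linear_combination this
    rcases mul_eq_zero.1 this with h' | h'
    · exact absurd (C_eq_zero.1 h') (by intro h''; linarith)
    · exact h'
  refine ⟨hF0, ?_, hH0⟩
  rw [hA, hF0] at hA0
  simpa using hA0

lemma aux_deg_comp_sub_lt (Q : ℝ[X]) (hQ : Q ≠ 0) (t : ℝ) :
    (Q - Q.comp (X - C t)).degree < Q.degree := by
  rcases eq_or_ne Q.natDegree 0 with h0 | h0
  · obtain ⟨c, rfl⟩ := Polynomial.natDegree_eq_zero.1 h0
    have hc : c ≠ 0 := fun h => hQ (by simp [h])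
    simp [degree_C hc]
  · have hnd : (X - C t : ℝ[X]).natDegree = 1 := natDegree_X_sub_C t
    have hlc : (Q.comp (X - C t)).leadingCoeff = Q.leadingCoeff := by
      rw [Polynomial.leadingCoeff_comp (by rw [hnd]; exact one_ne_zero)]
      simp
    have hcompne : Q.comp (X - C t) ≠ 0 := by
      intro h
      apply hQ
      rw [← leadingCoeff_eq_zero, ← hlc, h, leadingCoeff_zero]
    have hdeg : (Q.comp (X - C t)).degree = Q.degree := by
      rw [degree_eq_natDegree hcompne, degree_eq_natDegree hQ, natDegree_comp, hnd, mul_one]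
    exact degree_sub_lt hdeg.symm hQ hlc.symm

lemma aux_exists_F (a b : ℝ) (hab : a + b - 1 ≠ 0) (Q : ℝ[X]) :
    ∃ F : ℝ[X], C b * F + C a * F.comp (X - C 1) - F.comp (X - C 2) = Q := by
  suffices Hd : ∀ d : ℕ, ∀ Q : ℝ[X], Q.degree < (d : ℕ) →
      ∃ F : ℝ[X], C b * F + C a * F.comp (X - C 1) - F.comp (X - C 2) = Q by
    refine Hd (Q.natDegree + 1) Q ?_
    exact lt_of_le_of_lt (degree_le_natDegree) (by exact_mod_cast lt_add_one _)
  intro d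
  induction d with
  | zero =>
    intro Q hQ
    have hQ0 : Q = 0 := by
      rw [← Polynomial.degree_eq_bot]
      exact Nat.WithBot.lt_zero_iff.1 (by exact_mod_cast hQ)
    exact ⟨0, by simp [hQ0]⟩
  | succ d ih =>
    intro Q hQ
    rcases eq_or_ne Q 0 with rfl | hQ0
    · exact ⟨0, by simp⟩
    set c : ℝ := (a + b - 1)⁻¹ with hcdef
    set F0 : ℝ[X] := C c * Q with hF0
    set R : ℝ[X] := Q - (C b * F0 + C a * F0.comp (X - C 1) - F0.comp (X - C 2)) with hR
    have hc : c * (a + b - 1) = 1 := inv_mul_cancel₀ hab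
    have hc' : (C c : ℝ[X]) * (C a + C b - 1) = 1 := by
      have := congrArg C hc
      rw [map_mul, map_one, map_sub, map_add, map_one] at this
      exact this
    have e : R = C c * (C a * (Q - Q.comp (X - C 1)) - (Q - Q.comp (X - C 2))) := by
      rw [hR, hF0]
      simp only [mul_comp, C_comp]
      linear_combination (-Q) * hc'
    have hRdeg : R.degree < Q.degree := by
      rw [e]
      have d1 := aux_deg_comp_sub_lt Q hQ0 1
      have d2 := aux_deg_comp_sub_lt Q hQ0 2
      have m1 : (C a * (Q - Q.comp (X - C 1))).degree < Q.degree := by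
        refine lt_of_le_of_lt (degree_mul_le _ _) ?_
        refine lt_of_le_of_lt (add_le_add_left degree_C_le _) ?_
        simpa using d1
      refine lt_of_le_of_lt (degree_mul_le _ _) ?_
      refine lt_of_le_of_lt (add_le_add_left degree_C_le _) ?_
      simpa using lt_of_le_of_lt (degree_sub_le _ _) (max_lt m1 d2)
    have hRd : R.degree < (d : ℕ) := by
      have hQd : Q.degree ≤ (d : ℕ) := by
        rw [degree_eq_natDegree hQ0] at hQ ⊢
        exact_mod_cast Nat.lt_succ_iff.1 (by exact_mod_cast hQ)
      exact lt_of_lt_of_le hRdeg hQd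
    obtain ⟨F1, hF1⟩ := ih R hRd
    refine ⟨F0 + F1, ?_⟩
    rw [hR] at hF1
    rw [add_comp, add_comp]
    linear_combination hF1

theorem stmt_18 (a b : ℕ) (ha : 0 < a) (hb : 0 < b) (hab : 1 < a + b)
    (c0 c1 : ℤ) (hc : (c0, c1) ≠ (0, 0)) (s : ℕ → ℝ)
    (hs0 : s 0 = c0) (hs1 : s 1 = c1)
    (hrec : ∀ n : ℕ, s (n + 2) = a * s (n + 1) + b * s n)
    (h1 : 2 * (c1 : ℝ) - ((a : ℝ) + Real.sqrt ((a : ℝ) ^ 2 + 4 * b)) * c0 ≠ 0)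
    (h2 : 2 * (c1 : ℝ) - ((a : ℝ) - Real.sqrt ((a : ℝ) ^ 2 + 4 * b)) * c0 ≠ 0)
    (P : Polynomial ℝ) :
    ∃! T : Polynomial ℝ × Polynomial ℝ × Polynomial ℝ, ∀ n : ℕ, 1 ≤ n →
      2 * ∑ k ∈ Finset.Icc 1 n, P.eval (k : ℝ) * s (k - 1) =
        T.1.eval (n : ℝ) * s (n + 1) + T.2.1.eval (n : ℝ) * s n + T.2.2.eval (n : ℝ) := by
  have ha1 : (1 : ℝ) ≤ (a : ℝ) := by exact_mod_cast ha
  have hb1 : (1 : ℝ) ≤ (b : ℝ) := by exact_mod_cast hb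
  have hab2 : (2 : ℝ) ≤ (a : ℝ) + (b : ℝ) := by exact_mod_cast hab
  set q : ℝ := Real.sqrt ((a : ℝ) ^ 2 + 4 * b) with hqdef
  have hD : (0 : ℝ) ≤ (a : ℝ) ^ 2 + 4 * b := by positivity
  have hq2 : q ^ 2 = (a : ℝ) ^ 2 + 4 * b := Real.sq_sqrt hD
  have hqnn : 0 ≤ q := Real.sqrt_nonneg _
  have hqa : (a : ℝ) < q := by nlinarith
  have hqpos : 0 < q := by linarith
  set r1 : ℝ := ((a : ℝ) + q) / 2 with hr1def
  set r2 : ℝ := ((a : ℝ) - q) / 2 with hr2def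
  have hr2neg : r2 < 0 := by rw [hr2def]; linarith
  have h11 : (1 : ℝ) < r1 := by
    rw [hr1def]
    nlinarith [sq_nonneg (q + (a : ℝ) - 2), sq_nonneg (q - (a : ℝ) + 2)]
  have h21 : |r2| < r1 := by
    rw [abs_of_neg hr2neg, hr1def, hr2def]
    linarith
  set α : ℝ := ((c1 : ℝ) - r2 * c0) / q with hαdef
  set β : ℝ := (r1 * (c0 : ℝ) - c1) / q with hβdef
  have hα : α ≠ 0 := by
    intro h0
    apply h2
    rw [hαdef] at h0
    rcases div_eq_zero_iff.1 h0 with h' | h'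
    · rw [hr2def] at h'
      linear_combination 2 * h'
    · exact absurd h' hqpos.ne'
  have hβ : β ≠ 0 := by
    intro h0
    apply h1
    rw [hβdef] at h0
    rcases div_eq_zero_iff.1 h0 with h' | h'
    · rw [hr1def] at h'
      linear_combination (-2) * h'
    · exact absurd h' hqpos.ne'
  have hroot1 : r1 ^ 2 = (a : ℝ) * r1 + b := by
    rw [hr1def]; linear_combination hq2 / 4
  have hroot2 : r2 ^ 2 = (a : ℝ) * r2 + b := by
    rw [hr2def]; linear_combination hq2 / 4
  have keyinit0 : α + β = (c0 : ℝ) := by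
    rw [hαdef, hβdef, hr1def, hr2def]
    field_simp
    ring
  have keyinit1 : α * r1 + β * r2 = (c1 : ℝ) := by
    rw [hαdef, hβdef, hr1def, hr2def]
    field_simp
    ring
  clear_value q r1 r2 α β
  have key : ∀ n : ℕ, s n = α * r1 ^ n + β * r2 ^ n := by
    intro n
    induction n using Nat.strong_induction_on with
    | _ n ih =>
    match n with
    | 0 => rw [hs0]; simpa using keyinit0.symm
    | 1 => rw [hs1, pow_one, pow_one]; exact keyinit1.symm
    | (m + 2) =>
      rw [hrec m, ih (m + 1) (by omega), ih m (by omega)]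
      have p1 : r1 ^ (m + 2) = (a : ℝ) * r1 ^ (m + 1) + b * r1 ^ m := by
        calc r1 ^ (m + 2) = r1 ^ 2 * r1 ^ m := by ring
        _ = ((a : ℝ) * r1 + b) * r1 ^ m := by rw [hroot1]
        _ = (a : ℝ) * r1 ^ (m + 1) + b * r1 ^ m := by ring
      have p2 : r2 ^ (m + 2) = (a : ℝ) * r2 ^ (m + 1) + b * r2 ^ m := by
        calc r2 ^ (m + 2) = r2 ^ 2 * r2 ^ m := by ring
        _ = ((a : ℝ) * r2 + b) * r2 ^ m := by rw [hroot2]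
        _ = (a : ℝ) * r2 ^ (m + 1) + b * r2 ^ m := by ring
      linear_combination (-α) * p1 + (-β) * p2
  -- Existence
  obtain ⟨F, hF⟩ := aux_exists_F (a : ℝ) (b : ℝ)
    (ne_of_gt (by linarith : (0 : ℝ) < (a : ℝ) + (b : ℝ) - 1)) (C 2 * P)
  have hFe : ∀ x : ℝ, (b : ℝ) * F.eval x + (a : ℝ) * F.eval (x - 1) - F.eval (x - 2)
      = 2 * P.eval x := by
    intro x
    have := congrArg (eval x) hF
    simpa [eval_comp] using this
  set G : ℝ[X] := F.comp (X - C 1) - C (a : ℝ) * F with hGdef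
  have hGe : ∀ x : ℝ, G.eval x = F.eval (x - 1) - (a : ℝ) * F.eval x := by
    intro x
    rw [hGdef]
    simp [eval_comp]
  set cst : ℝ := 2 * P.eval 1 * s 0 - F.eval 1 * s 2 - G.eval 1 * s 1 with hcst
  have hex : ∀ n : ℕ, 1 ≤ n →
      2 * ∑ k ∈ Finset.Icc 1 n, P.eval (k : ℝ) * s (k - 1) =
        F.eval (n : ℝ) * s (n + 1) + G.eval (n : ℝ) * s n + (C cst).eval (n : ℝ) := by
    intro n hn
    induction n, hn using Nat.le_induction with
    | base =>
      simp only [Finset.Icc_self, Finset.sum_singleton, eval_C, hcst, Nat.cast_one]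
      norm_num
      ring
    | succ n hn ih =>
      rw [Finset.sum_Icc_succ_top (by omega : 1 ≤ n + 1)]
      have hstep := hrec n
      have e1' : (b : ℝ) * F.eval ((n : ℝ) + 1) + (a : ℝ) * F.eval (n : ℝ)
          - F.eval ((n : ℝ) - 1) = 2 * P.eval ((n : ℝ) + 1) := by
        simpa [show (n : ℝ) + 1 - 1 = (n : ℝ) by ring,
          show (n : ℝ) + 1 - 2 = (n : ℝ) - 1 by ring] using hFe ((n : ℝ) + 1)
      have e2' : G.eval ((n : ℝ) + 1) = F.eval (n : ℝ) - (a : ℝ) * F.eval ((n : ℝ) + 1) := by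
        simpa [show (n : ℝ) + 1 - 1 = (n : ℝ) by ring] using hGe ((n : ℝ) + 1)
      have e3 := hGe (n : ℝ)
      simp only [eval_C] at ih ⊢
      push_cast
      simp only [Nat.add_sub_cancel, show n + 1 + 1 = n + 2 from rfl]
      linear_combination ih - F.eval ((n : ℝ) + 1) * hstep - s (n + 1) * e2'
        + s n * e3 - s n * e1'
  refine ⟨(F, G, C cst), hex, ?_⟩
  intro T' hT'
  have hz : ∀ n : ℕ, 1 ≤ n →
      (T'.1 - F).eval (n : ℝ) * (α * r1 ^ (n + 1) + β * r2 ^ (n + 1)) +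
        (T'.2.1 - G).eval (n : ℝ) * (α * r1 ^ n + β * r2 ^ n) +
        (T'.2.2 - C cst).eval (n : ℝ) = 0 := by
    intro n hn
    have h1' := hT' n hn
    have h2' := hex n hn
    simp only [eval_sub]
    rw [← key (n + 1), ← key n]
    linear_combination h2' - h1'
  obtain ⟨e1, e2, e3⟩ := aux_core r1 r2 α β h11 h21 hr2neg hα hβ _ _ _ hz
  have g1 : T'.1 = F := sub_eq_zero.1 e1
  have g2 : T'.2.1 = G := sub_eq_zero.1 e2
  have g3 : T'.2.2 = C cst := sub_eq_zero.1 e3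
  rw [Prod.ext_iff, Prod.ext_iff]
  exact ⟨g1, g2, g3⟩
end

section
/- Let (s_n) be the generalized Fibonacci sequence with a, b ∈ ℕ⁺ (a + b > 1), c_0, c_1 ∈ ℤ, (c_0,c_1) ≠ (0,0), and suppose exactly one of 2c_1 − j_1·c_0 or 2c_1 − j_2·c_0 equals zero, where j_{1,2} = a ± √(a²+4b). Then for every polynomial P ∈ ℝ[x], there are infinitely many triples (F_1, G_1, H_1) ∈ ℝ[x]³ satisfying 2·∑_{k=1}^n P(k)·s_{k−1} = F_1(n)·s_{n+1} + G_1(n)·s_n + H_1(n) for all positive integers n. -/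
open Polynomial

/-- Surjectivity of `Q ↦ r·Q(X+1) - Q` on `ℝ[X]` when `r ≠ 1`. -/
lemma stmt_19_exQ (r : ℝ) (hr : r ≠ 1) (P : Polynomial ℝ) :
    ∃ Q : Polynomial ℝ, C r * Q.comp (X + 1) - Q = P := by
  suffices H : ∀ n : ℕ, ∀ P : Polynomial ℝ, P.natDegree ≤ n →
      ∃ Q : Polynomial ℝ, C r * Q.comp (X + 1) - Q = P from H P.natDegree P le_rfl
  intro n
  induction n using Nat.strong_induction_on with
  | _ n ih =>
  intro P hPn
  by_cases hP : P = 0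
  · exact ⟨0, by simp [hP]⟩
  set d := P.natDegree with hd
  set c := P.leadingCoeff / (r - 1) with hc
  set Q₀ : Polynomial ℝ := C c * X ^ d with hQ0
  have hX1 : (X + 1 : Polynomial ℝ) = X + C 1 := by simp
  have hL0 : C r * Q₀.comp (X + 1) - Q₀ = C c * (C r * (X + 1) ^ d - X ^ d) := by
    rw [hQ0, mul_comp, C_comp, pow_comp, X_comp]; ring
  have hmon : ((X + 1 : Polynomial ℝ) ^ d).Monic := by
    rw [hX1]; exact (monic_X_add_C 1).pow d
  have hdX : ((X + 1 : Polynomial ℝ) ^ d).natDegree = d := by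
    rw [hX1, natDegree_pow, natDegree_X_add_C, mul_one]
  have hcoeffX : ((X + 1 : Polynomial ℝ) ^ d).coeff d = 1 := by
    have := hmon.coeff_natDegree
    rwa [hdX] at this
  have hdegL : (C c * (C r * (X + 1) ^ d - X ^ d)).natDegree ≤ d := by
    refine le_trans (natDegree_C_mul_le _ _) ?_
    refine le_trans (natDegree_sub_le _ _) ?_
    simp only [max_le_iff]
    exact ⟨le_trans (natDegree_C_mul_le _ _) (le_of_eq hdX), by simp [natDegree_X_pow]⟩
  have hr1 : r - 1 ≠ 0 := sub_ne_zero.mpr hr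
  have hcoeffL : (C c * (C r * (X + 1) ^ d - X ^ d)).coeff d = P.leadingCoeff := by
    rw [coeff_C_mul, coeff_sub, coeff_C_mul, hcoeffX, coeff_X_pow, if_pos rfl, hc]
    field_simp
  set P' := P - (C c * (C r * (X + 1) ^ d - X ^ d)) with hP'
  by_cases hP'0 : P' = 0
  · refine ⟨Q₀, ?_⟩
    rw [hL0]
    exact (sub_eq_zero.mp hP'0).symm
  · have hcoeff' : P'.coeff d = 0 := by
      rw [hP', coeff_sub, hcoeffL]
      exact sub_eq_zero.mpr (by rw [hd]; rfl)
    have hle : P'.natDegree ≤ d := by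
      refine le_trans (natDegree_sub_le _ _) ?_
      simp only [max_le_iff]
      exact ⟨le_refl d, hdegL⟩
    have hne : P'.natDegree ≠ d := by
      intro hEq
      apply hP'0
      rw [← leadingCoeff_eq_zero, Polynomial.leadingCoeff, hEq, hcoeff']
    have hlt : P'.natDegree < n := lt_of_lt_of_le (lt_of_le_of_ne hle hne) hPn
    obtain ⟨Q₁, hQ₁⟩ := ih P'.natDegree hlt P' le_rfl
    refine ⟨Q₀ + Q₁, ?_⟩
    rw [add_comp]
    have hsplit : C r * (Q₀.comp (X + 1) + Q₁.comp (X + 1)) - (Q₀ + Q₁)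
        = (C r * Q₀.comp (X + 1) - Q₀) + (C r * Q₁.comp (X + 1) - Q₁) := by ring
    rw [hsplit, hL0, hQ₁, hP']
    ring

lemma stmt_19_aux (a b : ℕ) (c0 r : ℝ) (hr1 : r ≠ 1)
    (hr2 : r ^ 2 = a * r + b) (s : ℕ → ℝ)
    (hsf : ∀ n : ℕ, s n = c0 * r ^ n)
    (P : Polynomial ℝ) :
    {T : Polynomial ℝ × Polynomial ℝ × Polynomial ℝ | ∀ n : ℕ, 1 ≤ n →
      2 * ∑ k ∈ Finset.Icc 1 n, P.eval (k : ℝ) * s (k - 1) =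
        T.1.eval (n : ℝ) * s (n + 1) + T.2.1.eval (n : ℝ) * s n +
          T.2.2.eval (n : ℝ)}.Infinite := by
  obtain ⟨Q, hQ⟩ := stmt_19_exQ r hr1 (P.comp (X + 1))
  have hQn : ∀ x : ℝ, r * Q.eval (x + 1) - Q.eval x = P.eval (x + 1) := by
    intro x
    have := congrArg (Polynomial.eval x) hQ
    simpa [eval_comp] using this
  have hsum : ∀ n : ℕ, ∑ k ∈ Finset.Icc 1 n, P.eval (k : ℝ) * s (k - 1)
      = c0 * (Q.eval (n : ℝ) * r ^ n - Q.eval 0) := by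
    intro n
    induction n with
    | zero => simp
    | succ n ih =>
      rw [Finset.sum_Icc_succ_top (by omega), ih]
      have hkey := hQn (n : ℝ)
      have hsn : s (n + 1 - 1) = c0 * r ^ n := by simpa using hsf n
      rw [hsn]
      push_cast
      linear_combination (-(c0 * r ^ n)) * hkey
  apply Set.infinite_of_injective_forall_mem
    (f := fun t : ℝ => ((C t, C 2 * Q - C (t * r), C (-2 * c0 * Q.eval 0)) :
      Polynomial ℝ × Polynomial ℝ × Polynomial ℝ))
  · intro t t' hEq
    have := congrArg Prod.fst hEq
    simpa [C_inj] using this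
  · intro t
    intro n hn
    simp only [Set.mem_setOf_eq]
    rw [hsum n, hsf n, hsf (n + 1)]
    simp only [eval_sub, eval_mul, eval_add, eval_C, eval_ofNat, pow_succ]
    ring

theorem stmt_19 (a b : ℕ) (ha : 0 < a) (hb : 0 < b) (hab : 1 < a + b)
    (c0 c1 : ℤ) (hc : (c0, c1) ≠ (0, 0)) (s : ℕ → ℝ)
    (hs0 : s 0 = c0) (hs1 : s 1 = c1)
    (hrec : ∀ n : ℕ, s (n + 2) = a * s (n + 1) + b * s n)
    (h : (2 * (c1 : ℝ) - ((a : ℝ) + Real.sqrt ((a : ℝ) ^ 2 + 4 * b)) * c0 = 0 ∧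
          2 * (c1 : ℝ) - ((a : ℝ) - Real.sqrt ((a : ℝ) ^ 2 + 4 * b)) * c0 ≠ 0) ∨
         (2 * (c1 : ℝ) - ((a : ℝ) + Real.sqrt ((a : ℝ) ^ 2 + 4 * b)) * c0 ≠ 0 ∧
          2 * (c1 : ℝ) - ((a : ℝ) - Real.sqrt ((a : ℝ) ^ 2 + 4 * b)) * c0 = 0))
    (P : Polynomial ℝ) :
    {T : Polynomial ℝ × Polynomial ℝ × Polynomial ℝ | ∀ n : ℕ, 1 ≤ n →
      2 * ∑ k ∈ Finset.Icc 1 n, P.eval (k : ℝ) * s (k - 1) =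
        T.1.eval (n : ℝ) * s (n + 1) + T.2.1.eval (n : ℝ) * s n +
          T.2.2.eval (n : ℝ)}.Infinite := by
  set e := Real.sqrt ((a : ℝ) ^ 2 + 4 * b) with he_def
  have he : e ^ 2 = (a : ℝ) ^ 2 + 4 * b := Real.sq_sqrt (by positivity)
  obtain ⟨j, hjc, hj0⟩ : ∃ j : ℝ, (j = a + e ∨ j = a - e) ∧ 2 * (c1 : ℝ) - j * c0 = 0 := by
    rcases h with ⟨h1, _⟩ | ⟨_, h2⟩
    · exact ⟨(a : ℝ) + e, Or.inl rfl, h1⟩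
    · exact ⟨(a : ℝ) - e, Or.inr rfl, h2⟩
  set r := j / 2 with hr_def
  have hr2 : r ^ 2 = a * r + b := by
    rcases hjc with h' | h' <;> rw [hr_def, h'] <;> linear_combination he / 4
  have hr1 : r ≠ 1 := by
    intro hEq
    rw [hEq] at hr2
    have hab' : (1 : ℝ) < (a : ℝ) + (b : ℝ) := by exact_mod_cast hab
    simp at hr2
    linarith
  have hc1 : (c1 : ℝ) = r * c0 := by
    rw [hr_def]; linarith
  have hsf : ∀ n : ℕ, s n = (c0 : ℝ) * r ^ n := by
    intro n
    induction n using Nat.strong_induction_on with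
    | _ n ih =>
      match n with
      | 0 => simpa using hs0
      | 1 => rw [hs1, hc1]; ring
      | (m + 2) =>
        rw [hrec m, ih (m + 1) (by omega), ih m (by omega)]
        linear_combination (-((c0 : ℝ) * r ^ m)) * hr2
  exact stmt_19_aux a b (c0 : ℝ) r hr1 hr2 s hsf P
end
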